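/- Let Y be a complex 3×3 matrix with SVD Y = U_L · diag(y₁, y₂, y₃) · U_R†, 0 ≤ y₁ ≤ y₂ ≤ y₃, y₃² > 2y₂², and let β index a longest column of Y (i.e. (Y†Y)_{ββ} ≥ (Y†Y)_{jj} for all j). Then |U_{R,β3}|² ≥ 1/(X+1) and (|U_{R,β1}|² + |U_{R,β2}|²)/|U_{R,β3}|² ≤ X, where X = (2y₃² − y₂²)/(y₃² − 2y₂²). -/
import Mathlib


open Matrix

/-- Lemma 1, right-handed version: for the longest column β of Y,
`|U_{R,β3}|² ≥ 1/(X+1)` and `(|U_{R,β1}|² + |U_{R,β2}|²)/|U_{R,β3}|² ≤ X`. -/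
theorem longest_column_right_singular_component_bounds
    (Y U_L U_R : Matrix (Fin 3) (Fin 3) ℂ) (y : Fin 3 → ℝ) (β : Fin 3)
    (hUL : U_L ∈ Matrix.unitaryGroup (Fin 3) ℂ)
    (hUR : U_R ∈ Matrix.unitaryGroup (Fin 3) ℂ)
    (hy0 : 0 ≤ y 0) (h01 : y 0 ≤ y 1) (h12 : y 1 ≤ y 2)
    (hgap : 2 * (y 1)^2 < (y 2)^2)
    (hSVD : Y = U_L * Matrix.diagonal (fun i => (y i : ℂ)) * U_Rᴴ)
    (hβ : ∀ j, ∑ k, ‖Y k j‖^2 ≤ ∑ k, ‖Y k β‖^2) :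
    1 / ((2 * (y 2)^2 - (y 1)^2) / ((y 2)^2 - 2 * (y 1)^2) + 1) ≤ ‖U_R β 2‖^2 ∧
    (‖U_R β 0‖^2 + ‖U_R β 1‖^2) / ‖U_R β 2‖^2
      ≤ (2 * (y 2)^2 - (y 1)^2) / ((y 2)^2 - 2 * (y 1)^2) := by
  -- unitarity facts
  have hUL1 : U_Lᴴ * U_L = (1 : Matrix (Fin 3) (Fin 3) ℂ) := by
    simpa [star_eq_conjTranspose] using mem_unitaryGroup_iff'.mp hUL
  have hUR1 : U_R * U_Rᴴ = (1 : Matrix (Fin 3) (Fin 3) ℂ) := by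
    simpa [star_eq_conjTranspose] using mem_unitaryGroup_iff.mp hUR
  have hUR2 : U_Rᴴ * U_R = (1 : Matrix (Fin 3) (Fin 3) ℂ) := by
    simpa [star_eq_conjTranspose] using mem_unitaryGroup_iff'.mp hUR
  -- Gram matrix identity
  have hGram : Yᴴ * Y = U_R * Matrix.diagonal (fun i => ((y i)^2 : ℂ)) * U_Rᴴ := by
    have hd : (Matrix.diagonal (fun i => (y i : ℂ)))ᴴ = Matrix.diagonal (fun i => (y i : ℂ)) := by
      simp [diagonal_conjTranspose, Function.comp]
    have cancel : ∀ X : Matrix (Fin 3) (Fin 3) ℂ, U_Lᴴ * (U_L * X) = X := fun X => by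
      rw [← Matrix.mul_assoc, hUL1, Matrix.one_mul]
    have hdd : Matrix.diagonal (fun i => (y i : ℂ)) * (Matrix.diagonal (fun i => (y i : ℂ)) * U_Rᴴ)
        = Matrix.diagonal (fun i => ((y i)^2 : ℂ)) * U_Rᴴ := by
      rw [← Matrix.mul_assoc, diagonal_mul_diagonal]
      congr 1
      ext i
      ring
    rw [hSVD]
    simp only [conjTranspose_mul, conjTranspose_conjTranspose, hd, Matrix.mul_assoc, cancel, hdd]
  -- column norms in terms of U_R
  have hN : ∀ j, (∑ k, ‖Y k j‖^2 : ℝ) = ∑ k, (y k)^2 * ‖U_R j k‖^2 := by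
    intro j
    have h1 : (Yᴴ * Y) j j = ((∑ k, ‖Y k j‖^2 : ℝ) : ℂ) := by
      push_cast
      simp [Matrix.mul_apply, conjTranspose_apply, RCLike.conj_mul]
    have h2 : (Yᴴ * Y) j j = ((∑ k, (y k)^2 * ‖U_R j k‖^2 : ℝ) : ℂ) := by
      rw [hGram]
      push_cast
      rw [Matrix.mul_apply]
      congr 1
      ext k
      rw [Matrix.mul_diagonal, conjTranspose_apply, mul_assoc, mul_comm (U_R j k), mul_assoc]
      simp [Complex.star_def, RCLike.conj_mul]
    exact_mod_cast h1.symm.trans h2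
  -- row sum at β
  have hrow : (∑ k, ‖U_R β k‖^2 : ℝ) = 1 := by
    have := congrFun (congrFun hUR1 β) β
    rw [Matrix.mul_apply] at this
    simp [conjTranspose_apply, Complex.star_def, RCLike.mul_conj] at this
    exact_mod_cast this
  -- column sums
  have hcol : ∀ k, (∑ j, ‖U_R j k‖^2 : ℝ) = 1 := by
    intro k
    have := congrFun (congrFun hUR2 k) k
    rw [Matrix.mul_apply] at this
    simp [conjTranspose_apply, Complex.star_def, RCLike.conj_mul] at this
    exact_mod_cast this
  -- the maximal column dominates the average
  have hβ' : ∀ j, (∑ k, (y k)^2 * ‖U_R j k‖^2 : ℝ) ≤ ∑ k, (y k)^2 * ‖U_R β k‖^2 := by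
    intro j
    rw [← hN j, ← hN β]
    exact hβ j
  have hsum : (∑ j, ∑ k, ((y k)^2 * ‖U_R j k‖^2 : ℝ)) = (y 0)^2 + (y 1)^2 + (y 2)^2 := by
    rw [Finset.sum_comm]
    have : ∀ k, (∑ j, ((y k)^2 * ‖U_R j k‖^2 : ℝ)) = (y k)^2 := by
      intro k
      rw [← Finset.mul_sum, hcol k, mul_one]
    rw [Fin.sum_univ_three, this 0, this 1, this 2]
  have ha : 0 ≤ ‖U_R β 0‖^2 := sq_nonneg _
  have hb : 0 ≤ ‖U_R β 1‖^2 := sq_nonneg _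
  have hc0 : 0 ≤ ‖U_R β 2‖^2 := sq_nonneg _
  have hrow' : ‖U_R β 0‖^2 + ‖U_R β 1‖^2 + ‖U_R β 2‖^2 = 1 := by
    have := hrow
    rwa [Fin.sum_univ_three] at this
  have h3 : (y 0)^2 + (y 1)^2 + (y 2)^2
      ≤ 3 * ((y 0)^2 * ‖U_R β 0‖^2 + (y 1)^2 * ‖U_R β 1‖^2 + (y 2)^2 * ‖U_R β 2‖^2) := by
    have e0 := hβ' 0
    have e1 := hβ' 1
    have e2 := hβ' 2
    simp only [Fin.sum_univ_three] at e0 e1 e2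
    have hs := hsum
    simp only [Fin.sum_univ_three] at hs
    linarith
  have hs01 : (y 0)^2 ≤ (y 1)^2 := by nlinarith
  have hs1 : (0:ℝ) ≤ (y 1)^2 := sq_nonneg _
  have key : (y 2)^2 - 2*(y 1)^2 ≤ 3*((y 2)^2 - (y 1)^2) * ‖U_R β 2‖^2 := by
    nlinarith [mul_nonneg (sub_nonneg.2 hs01) ha, sq_nonneg (y 0)]
  have hD : (0:ℝ) < (y 2)^2 - 2*(y 1)^2 := by linarith
  have hT : (0:ℝ) < 3*((y 2)^2 - (y 1)^2) := by nlinarith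
  have hc : (0:ℝ) < ‖U_R β 2‖^2 := by
    by_contra h
    push_neg at h
    nlinarith
  constructor
  · have hX1 : (2*(y 2)^2 - (y 1)^2)/((y 2)^2 - 2*(y 1)^2) + 1
        = (3*((y 2)^2 - (y 1)^2))/((y 2)^2 - 2*(y 1)^2) := by
      field_simp
      ring
    rw [hX1, one_div_div, div_le_iff₀ hT]
    linarith [key]
  · have hab : ‖U_R β 0‖^2 + ‖U_R β 1‖^2 = 1 - ‖U_R β 2‖^2 := by linarith
    rw [hab, div_le_iff₀ hc, div_mul_eq_mul_div, le_div_iff₀ hD]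
    nlinarith [key]
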